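/- Let Z₁, …, Z_d be i.i.d. with density q(z) = exp(ψ(z))/A, ψ a polynomial of even degree 2n with negative leading coefficient. Then there exists a constant C₄ > 0 such that P( max_{1≤i≤d} |ψ'(Z_i)| > C₄ (log d)^{1 − 1/(2n)} ) → 0 as d → ∞. -/

import Mathlib

open MeasureTheory Real Polynomial Filter

lemma aux_eval_abs_le (p : Polynomial ℝ) (z : ℝ) :
    |p.eval z| ≤ (∑ i ∈ Finset.range (p.natDegree + 1), |p.coeff i|) * (max 1 |z|) ^ p.natDegree := by
  have hM : (1:ℝ) ≤ max 1 |z| := le_max_left _ _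
  rw [Polynomial.eval_eq_sum_range]
  calc |∑ i ∈ Finset.range (p.natDegree + 1), p.coeff i * z ^ i|
      ≤ ∑ i ∈ Finset.range (p.natDegree + 1), |p.coeff i * z ^ i| :=
        Finset.abs_sum_le_sum_abs _ _
    _ ≤ ∑ i ∈ Finset.range (p.natDegree + 1), |p.coeff i| * (max 1 |z|) ^ p.natDegree := by
        refine Finset.sum_le_sum fun i hi => ?_
        rw [abs_mul, abs_pow]
        refine mul_le_mul_of_nonneg_left ?_ (abs_nonneg _)
        calc |z| ^ i ≤ (max 1 |z|) ^ i :=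
              pow_le_pow_left₀ (abs_nonneg z) (le_max_right _ _) i
          _ ≤ (max 1 |z|) ^ p.natDegree := by
              refine pow_le_pow_right₀ hM ?_
              exact Nat.lt_succ_iff.mp (Finset.mem_range.mp hi)
    _ = _ := by rw [← Finset.sum_mul]

lemma aux_poly_bddAbove (p : Polynomial ℝ) (hev : Even p.natDegree) (h0 : p.natDegree ≠ 0)
    (hl : p.leadingCoeff < 0) : ∃ K, ∀ z : ℝ, p.eval z ≤ K := by
  have hdegpos : 0 < p.degree := natDegree_pos_iff_degree_pos.mp (Nat.pos_of_ne_zero h0)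
  have h1 : Tendsto (fun x => p.eval x) atTop atBot :=
    p.tendsto_atBot_of_leadingCoeff_nonpos hdegpos hl.le
  set q : Polynomial ℝ := p.comp (-Polynomial.X) with hq
  have hqdeg : q.natDegree = p.natDegree := by
    rw [hq, natDegree_comp, natDegree_neg, natDegree_X, mul_one]
  have hqlead : q.leadingCoeff = p.leadingCoeff := by
    rw [hq, leadingCoeff_comp (by rw [natDegree_neg, natDegree_X]; exact one_ne_zero),
      leadingCoeff_neg, leadingCoeff_X, hev.neg_one_pow, mul_one]
  have hqdegpos : 0 < q.degree :=
    natDegree_pos_iff_degree_pos.mp (by rw [hqdeg]; exact Nat.pos_of_ne_zero h0)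
  have h2' : Tendsto (fun x => q.eval x) atTop atBot :=
    q.tendsto_atBot_of_leadingCoeff_nonpos hqdegpos (by rw [hqlead]; exact hl.le)
  have h2 : Tendsto (fun x => p.eval x) atBot atBot := by
    have := h2'.comp tendsto_neg_atBot_atTop
    refine this.congr fun x => ?_
    simp [hq]
  have hco : Tendsto (fun x => p.eval x) (cocompact ℝ) atBot := by
    rw [cocompact_eq_atBot_atTop]
    exact tendsto_sup.mpr ⟨h2, h1⟩
  obtain ⟨x, hx⟩ := p.continuous.exists_forall_ge hco
  exact ⟨p.eval x, hx⟩

lemma aux_sq_le (n : ℕ) (hn : 0 < n) (z : ℝ) : z ^ 2 - 1 ≤ z ^ (2 * n) := by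
  rw [pow_mul]
  rcases le_or_gt 1 (z ^ 2) with h | h
  · have := le_self_pow₀ h hn.ne'
    linarith
  · have : (0:ℝ) ≤ (z ^ 2) ^ n := pow_nonneg (sq_nonneg z) n
    linarith

lemma aux_integrable (n : ℕ) (hn : 0 < n) (K b : ℝ) (hb : 0 < b) :
    Integrable (fun z : ℝ => Real.exp (K - b * z ^ (2 * n))) := by
  have hbound : ∀ z : ℝ, Real.exp (K - b * z ^ (2 * n))
      ≤ Real.exp (K + b) * Real.exp (-b * z ^ 2) := by
    intro z
    rw [← Real.exp_add]
    apply Real.exp_le_exp.mpr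
    have := aux_sq_le n hn z
    nlinarith
  refine Integrable.mono' ((integrable_exp_neg_mul_sq hb).const_mul (Real.exp (K + b)))
    ?_ (ae_of_all _ fun z => ?_)
  · exact (Real.continuous_exp.comp (by continuity)).aestronglyMeasurable
  · rw [Real.norm_eq_abs, abs_of_pos (Real.exp_pos _)]
    exact hbound z

lemma aux_growth (n : ℕ) (hn : 0 < n) (ψ : Polynomial ℝ) (hdeg : ψ.natDegree = 2 * n)
    (hlead : ψ.leadingCoeff < 0) :
    ∃ K, ∀ z : ℝ, ψ.eval z ≤ K - (-ψ.leadingCoeff / 2) * z ^ (2 * n) := by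
  set a := ψ.leadingCoeff with ha
  have ha2 : a / 2 ≠ 0 := div_ne_zero hlead.ne two_ne_zero
  set φ : Polynomial ℝ := ψ - Polynomial.C (a / 2) * Polynomial.X ^ (2 * n) with hφ
  have hcoeffψ : ψ.coeff (2 * n) = a := by rw [← hdeg]; exact ψ.coeff_natDegree
  have hcoeffφ : φ.coeff (2 * n) = a / 2 := by
    rw [hφ, coeff_sub, coeff_C_mul, coeff_X_pow, if_pos rfl, mul_one, hcoeffψ]
    ring
  have hφdegle : φ.natDegree ≤ 2 * n := by
    refine le_trans (natDegree_sub_le _ _) ?_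
    rw [hdeg, natDegree_C_mul_X_pow (2 * n) (a / 2) ha2, max_self]
  have hφdeg : φ.natDegree = 2 * n :=
    le_antisymm hφdegle (le_natDegree_of_ne_zero (by rw [hcoeffφ]; exact ha2))
  have hφlead : φ.leadingCoeff = a / 2 := by
    rw [leadingCoeff, hφdeg, hcoeffφ]
  obtain ⟨K, hK⟩ := aux_poly_bddAbove φ (by rw [hφdeg]; exact even_two_mul n)
    (by rw [hφdeg]; positivity) (by rw [hφlead]; linarith)
  refine ⟨K, fun z => ?_⟩
  have hev : φ.eval z = ψ.eval z - a / 2 * z ^ (2 * n) := by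
    simp [hφ]
  have := hK z
  rw [hev] at this
  linarith

set_option maxHeartbeats 2000000 in
/-- For `Z₁, …, Z_d` i.i.d. with density `q(z) = exp(ψ(z))/A`, `ψ` of
even degree `2n > 0` with negative leading coefficient, there exists `C₄ > 0` such
that `P(max_{1≤i≤d} |ψ'(Z_i)| > C₄ (log d)^(1 - 1/(2n))) → 0` as `d → ∞`.
(`ψ' = (d/dz) log q`.) -/
theorem max_score_growth_exp_poly (n : ℕ) (hn : 0 < n) (ψ : Polynomial ℝ)
    (hdeg : ψ.natDegree = 2 * n) (hlead : ψ.leadingCoeff < 0)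
    (A : ℝ) (hA : A = ∫ z : ℝ, Real.exp (ψ.eval z))
    {Ω : Type*} [MeasurableSpace Ω] (P : Measure Ω) [IsProbabilityMeasure P]
    (Z : ℕ → Ω → ℝ)
    (hindep : ProbabilityTheory.iIndepFun Z P)
    (hdist : ∀ i, Measure.map (Z i) P
      = volume.withDensity (fun z => ENNReal.ofReal (Real.exp (ψ.eval z) / A))) :
    ∃ C₄ > (0 : ℝ), Filter.Tendsto
      (fun d : ℕ => P {ω | ∃ i < d,
        C₄ * (Real.log d) ^ ((1 : ℝ) - 1 / (2 * n)) < |(Polynomial.derivative ψ).eval (Z i ω)|})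
      Filter.atTop (nhds 0) := by
  obtain ⟨K, hK⟩ := aux_growth n hn ψ hdeg hlead
  set b : ℝ := -ψ.leadingCoeff / 2 with hbdef
  have hb : 0 < b := by rw [hbdef]; linarith
  have hint : Integrable (fun z : ℝ => Real.exp (ψ.eval z)) := by
    refine (aux_integrable n hn K b hb).mono'
      ((Real.continuous_exp.comp ψ.continuous).aestronglyMeasurable)
      (ae_of_all _ fun z => ?_)
    rw [Real.norm_eq_abs, abs_of_pos (Real.exp_pos _)]
    exact Real.exp_le_exp.mpr (hK z)
  have hApos : 0 < A := by rw [hA]; exact integral_exp_pos hint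
  set g : ℝ → ℝ := fun z => Real.exp (K - b / 2 * z ^ (2 * n)) with hgdef
  have hg : Integrable g := aux_integrable n hn K (b / 2) (by linarith)
  have hgnn : ∀ z, 0 ≤ g z := fun z => (Real.exp_pos _).le
  set Gv : ℝ := (∫ z, g z) / A with hGvdef
  have hGvnn : 0 ≤ Gv := div_nonneg (integral_nonneg hgnn) hApos.le
  set μ : Measure ℝ :=
    volume.withDensity (fun z => ENNReal.ofReal (Real.exp (ψ.eval z) / A)) with hμ
  have hμuniv : μ Set.univ = 1 := by
    rw [hμ, withDensity_apply _ MeasurableSet.univ, Measure.restrict_univ,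
      ← ofReal_integral_eq_lintegral_ofReal (hint.div_const A)
        (ae_of_all _ fun z => div_nonneg (Real.exp_pos _).le hApos.le),
      integral_div, ← hA, div_self hApos.ne', ENNReal.ofReal_one]
  have haem : ∀ i, AEMeasurable (Z i) P := by
    intro i
    by_contra h
    have h0 : μ = 0 := (hdist i).symm.trans (Measure.map_of_not_aemeasurable h)
    rw [h0] at hμuniv
    simp at hμuniv
  -- tail bound for μ
  have htail : ∀ s : ℝ, 0 ≤ s →
      μ {z | s ≤ |z|} ≤ ENNReal.ofReal (Gv * Real.exp (-(b / 2) * s ^ (2 * n))) := by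
    intro s hs
    have hTmeas : MeasurableSet {z : ℝ | s ≤ |z|} :=
      (isClosed_le continuous_const continuous_abs).measurableSet
    rw [hμ, withDensity_apply _ hTmeas]
    set c : ℝ := Real.exp (-(b / 2) * s ^ (2 * n)) with hc
    have hcpos : 0 < c := Real.exp_pos _
    have hpt : ∀ z ∈ {z : ℝ | s ≤ |z|},
        ENNReal.ofReal (Real.exp (ψ.eval z) / A) ≤ ENNReal.ofReal (c * g z / A) := by
      intro z hz
      apply ENNReal.ofReal_le_ofReal
      have hzm : s ^ (2 * n) ≤ z ^ (2 * n) := by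
        have h1 : s ^ (2 * n) ≤ |z| ^ (2 * n) := pow_le_pow_left₀ hs hz _
        have h2 : |z| ^ (2 * n) = z ^ (2 * n) := by
          rw [pow_mul, sq_abs, ← pow_mul]
        rwa [h2] at h1
      have hexp : Real.exp (ψ.eval z) ≤ c * g z := by
        rw [hc, hgdef, ← Real.exp_add]
        apply Real.exp_le_exp.mpr
        have h3 := hK z
        have h4 : b / 2 * s ^ (2 * n) ≤ b / 2 * z ^ (2 * n) :=
          mul_le_mul_of_nonneg_left hzm (by linarith)
        linarith
      exact div_le_div_of_nonneg_right hexp hApos.le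
    calc ∫⁻ z in {z : ℝ | s ≤ |z|}, ENNReal.ofReal (Real.exp (ψ.eval z) / A)
        ≤ ∫⁻ z in {z : ℝ | s ≤ |z|}, ENNReal.ofReal (c * g z / A) := by
          refine setLIntegral_mono ?_ hpt
          exact (ENNReal.measurable_ofReal.comp
            (((continuous_const.mul (Real.continuous_exp.comp (by continuity))).div_const
              A).measurable))
      _ ≤ ∫⁻ z, ENNReal.ofReal (c * g z / A) := setLIntegral_le_lintegral _ _
      _ = ENNReal.ofReal (∫ z, c * g z / A) :=
          (ofReal_integral_eq_lintegral_ofReal ((hg.const_mul c).div_const A)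
            (ae_of_all _ fun z => div_nonneg (mul_nonneg hcpos.le (hgnn z)) hApos.le)).symm
      _ = ENNReal.ofReal (Gv * c) := by
          rw [integral_div, integral_const_mul, hGvdef]
          ring_nf
  -- score polynomial bound
  set ψ' : Polynomial ℝ := Polynomial.derivative ψ with hψ'
  set C₅ : ℝ := (∑ i ∈ Finset.range (ψ'.natDegree + 1), |ψ'.coeff i|) + 1 with hC5def
  have hC5 : 0 < C₅ := by
    have : 0 ≤ ∑ i ∈ Finset.range (ψ'.natDegree + 1), |ψ'.coeff i| :=
      Finset.sum_nonneg fun i _ => abs_nonneg _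
    rw [hC5def]; linarith
  have hC5bound : ∀ z : ℝ, |ψ'.eval z| ≤ C₅ * (max 1 |z|) ^ (2 * n - 1) := by
    intro z
    have hM : (1:ℝ) ≤ max 1 |z| := le_max_left _ _
    have hM0 : (0:ℝ) ≤ max 1 |z| := by linarith
    have hdd : ψ'.natDegree ≤ 2 * n - 1 := by
      have := Polynomial.natDegree_derivative_le ψ
      rw [hdeg] at this
      exact this
    calc |ψ'.eval z|
        ≤ (∑ i ∈ Finset.range (ψ'.natDegree + 1), |ψ'.coeff i|) * (max 1 |z|) ^ ψ'.natDegree :=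
          aux_eval_abs_le ψ' z
      _ ≤ C₅ * (max 1 |z|) ^ (2 * n - 1) := by
          refine mul_le_mul (by rw [hC5def]; linarith) (pow_le_pow_right₀ hM hdd)
            (pow_nonneg hM0 _) hC5.le
  set c₀ : ℝ := max 1 (4 / b) with hc₀def
  have hc₀ : (1:ℝ) ≤ c₀ := le_max_left _ _
  refine ⟨C₅ * c₀, by nlinarith, ?_⟩
  -- eventual bound
  have hub : ∀ᶠ d : ℕ in atTop,
      P {ω | ∃ i < d, C₅ * c₀ * (Real.log d) ^ ((1 : ℝ) - 1 / (2 * n)) < |ψ'.eval (Z i ω)|}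
        ≤ ENNReal.ofReal (Gv / d) := by
    filter_upwards [eventually_ge_atTop 3] with d hd3
    have hd0 : (0:ℝ) < d := by
      have : (3:ℝ) ≤ d := by exact_mod_cast hd3
      linarith
    have hL : 1 ≤ Real.log d := by
      rw [Real.le_log_iff_exp_le hd0]
      calc Real.exp 1 ≤ 2.7182818286 := Real.exp_one_lt_d9.le
        _ ≤ 3 := by norm_num
        _ ≤ d := by exact_mod_cast hd3
    set L : ℝ := Real.log d with hLdef
    have hL0 : (0:ℝ) ≤ L := by linarith
    set γ : ℝ := (1 : ℝ) - 1 / (2 * n) with hγdef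
    have hnR : (1:ℝ) ≤ (n:ℝ) := by exact_mod_cast hn
    have hm1R : (1:ℝ) ≤ 2 * (n:ℝ) - 1 := by linarith
    have hγeq : γ = (2 * (n:ℝ) - 1) / (2 * (n:ℝ)) := by
      rw [hγdef]; field_simp
    have hγ0 : 0 ≤ γ := by rw [hγeq]; positivity
    have hLγ : 1 ≤ L ^ γ := by
      calc (1:ℝ) = (1:ℝ) ^ γ := (Real.one_rpow γ).symm
        _ ≤ L ^ γ := Real.rpow_le_rpow zero_le_one hL hγ0
    have hbase1 : (1:ℝ) ≤ c₀ * L ^ γ := by nlinarith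
    have hbase0 : (0:ℝ) ≤ c₀ * L ^ γ := by linarith
    set s : ℝ := (c₀ * L ^ γ) ^ ((1:ℝ) / (2 * (n:ℝ) - 1)) with hsdef
    have hs1 : (1:ℝ) ≤ s := by
      calc (1:ℝ) = (1:ℝ) ^ ((1:ℝ) / (2 * (n:ℝ) - 1)) := (Real.one_rpow _).symm
        _ ≤ s := Real.rpow_le_rpow zero_le_one hbase1 (by positivity)
    have hs0 : (0:ℝ) ≤ s := by linarith
    have hne : (2 * (n:ℝ) - 1) ≠ 0 := by linarith
    have hcast : ((2 * n - 1 : ℕ) : ℝ) = 2 * (n:ℝ) - 1 := by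
      rw [Nat.cast_sub (by omega : 1 ≤ 2 * n)]
      push_cast; ring
    have hspow : s ^ (2 * n - 1) = c₀ * L ^ γ := by
      rw [hsdef, ← Real.rpow_natCast ((c₀ * L ^ γ) ^ ((1:ℝ) / (2 * (n:ℝ) - 1))) (2 * n - 1),
        ← Real.rpow_mul hbase0, hcast, one_div_mul_cancel hne, Real.rpow_one]
    set qe : ℝ := (2 * (n:ℝ)) / (2 * (n:ℝ) - 1) with hqedef
    have hq1 : (1:ℝ) ≤ qe := by
      rw [hqedef, le_div_iff₀ (by linarith)]
      linarith
    have hsm : s ^ (2 * n) = (c₀ * L ^ γ) ^ qe := by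
      rw [hsdef, ← Real.rpow_natCast ((c₀ * L ^ γ) ^ ((1:ℝ) / (2 * (n:ℝ) - 1))) (2 * n),
        ← Real.rpow_mul hbase0]
      congr 1
      rw [hqedef]
      push_cast
      field_simp
    have hγq : γ * qe = 1 := by
      rw [hγeq, hqedef, div_mul_div_comm, mul_comm]
      exact div_self (by nlinarith)
    have hc₀0 : (0:ℝ) ≤ c₀ := by linarith
    have hdecomp : (c₀ * L ^ γ) ^ qe = c₀ ^ qe * L := by
      rw [Real.mul_rpow hc₀0 (Real.rpow_nonneg hL0 γ), ← Real.rpow_mul hL0, hγq,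
        Real.rpow_one]
    have hc₀q : 4 / b ≤ c₀ ^ qe := by
      calc 4 / b ≤ c₀ := le_max_right _ _
        _ = c₀ ^ (1:ℝ) := (Real.rpow_one c₀).symm
        _ ≤ c₀ ^ qe := Real.rpow_le_rpow_of_exponent_le hc₀ hq1
    have hkey : 2 * L ≤ b / 2 * s ^ (2 * n) := by
      rw [hsm, hdecomp]
      have h1 : 4 / b * L ≤ c₀ ^ qe * L := mul_le_mul_of_nonneg_right hc₀q hL0
      have h2 : b / 2 * (4 / b * L) = 2 * L := by field_simp; ring
      nlinarith
    -- inclusion of events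
    have hincl : {z : ℝ | C₅ * c₀ * L ^ γ < |ψ'.eval z|} ⊆ {z : ℝ | s ≤ |z|} := by
      intro z hz
      by_contra hcon
      rw [Set.mem_setOf_eq, not_le] at hcon
      have hMs : max 1 |z| ≤ s := max_le hs1 hcon.le
      have hle : |ψ'.eval z| ≤ C₅ * c₀ * L ^ γ := by
        calc |ψ'.eval z| ≤ C₅ * (max 1 |z|) ^ (2 * n - 1) := hC5bound z
          _ ≤ C₅ * s ^ (2 * n - 1) := by
              exact mul_le_mul_of_nonneg_left
                (pow_le_pow_left₀ (le_trans zero_le_one (le_max_left _ _)) hMs _) hC5.le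
          _ = C₅ * (c₀ * L ^ γ) := by rw [hspow]
          _ = C₅ * c₀ * L ^ γ := by ring
      exact absurd hz (not_lt.mpr hle)
    have hSmeas : MeasurableSet {z : ℝ | C₅ * c₀ * L ^ γ < |ψ'.eval z|} :=
      (isOpen_lt continuous_const (continuous_abs.comp ψ'.continuous)).measurableSet
    have hμS : μ {z : ℝ | C₅ * c₀ * L ^ γ < |ψ'.eval z|}
        ≤ ENNReal.ofReal (Gv * ((d:ℝ)⁻¹ * (d:ℝ)⁻¹)) := by
      refine le_trans (measure_mono hincl) (le_trans (htail s hs0) ?_)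
      apply ENNReal.ofReal_le_ofReal
      refine mul_le_mul_of_nonneg_left ?_ hGvnn
      calc Real.exp (-(b / 2) * s ^ (2 * n)) ≤ Real.exp (-(2 * L)) := by
            apply Real.exp_le_exp.mpr
            nlinarith
        _ = (d:ℝ)⁻¹ * (d:ℝ)⁻¹ := by
            rw [show -(2 * L) = -L + -L by ring, Real.exp_add, Real.exp_neg, hLdef,
              Real.exp_log hd0]
    have hset : {ω | ∃ i < d, C₅ * c₀ * L ^ γ < |ψ'.eval (Z i ω)|}
        = ⋃ i ∈ Finset.range d, Z i ⁻¹' {z : ℝ | C₅ * c₀ * L ^ γ < |ψ'.eval z|} := by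
      ext ω
      simp [Set.mem_iUnion, Set.mem_preimage]
    calc P {ω | ∃ i < d, C₅ * c₀ * L ^ γ < |ψ'.eval (Z i ω)|}
        = P (⋃ i ∈ Finset.range d,
            Z i ⁻¹' {z : ℝ | C₅ * c₀ * L ^ γ < |ψ'.eval z|}) := by rw [hset]
      _ ≤ ∑ i ∈ Finset.range d,
            P (Z i ⁻¹' {z : ℝ | C₅ * c₀ * L ^ γ < |ψ'.eval z|}) :=
          measure_biUnion_finset_le _ _
      _ ≤ ∑ _i ∈ Finset.range d, ENNReal.ofReal (Gv * ((d:ℝ)⁻¹ * (d:ℝ)⁻¹)) := by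
          refine Finset.sum_le_sum fun i _ => ?_
          rw [← Measure.map_apply_of_aemeasurable (haem i) hSmeas, hdist i]
          exact hμS
      _ = (d : ENNReal) * ENNReal.ofReal (Gv * ((d:ℝ)⁻¹ * (d:ℝ)⁻¹)) := by
          rw [Finset.sum_const, Finset.card_range, nsmul_eq_mul]
      _ ≤ ENNReal.ofReal (Gv / d) := by
          rw [← ENNReal.ofReal_natCast d, ← ENNReal.ofReal_mul (Nat.cast_nonneg d)]
          apply ENNReal.ofReal_le_ofReal
          rw [show (d:ℝ) * (Gv * ((d:ℝ)⁻¹ * (d:ℝ)⁻¹)) = Gv * (d:ℝ)⁻¹ * ((d:ℝ) * (d:ℝ)⁻¹) by ring,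
            mul_inv_cancel₀ hd0.ne', mul_one, div_eq_mul_inv]
  have h0' : Filter.Tendsto (fun d : ℕ => ENNReal.ofReal (Gv / d)) atTop (nhds 0) := by
    rw [← ENNReal.ofReal_zero]
    exact ENNReal.tendsto_ofReal (tendsto_const_div_atTop_nhds_zero_nat Gv)
  exact tendsto_of_tendsto_of_tendsto_of_le_of_le' tendsto_const_nhds h0'
    (Filter.Eventually.of_forall fun d => zero_le) hub
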